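/- arXiv:0710.3470 — 4 statements merged into one kernel-verified Lean document; each statement's English description precedes it below -/
import Mathlib

section
/- Let R be a commutative ring, n ≥ 1, and let g, b be n×n matrices over R with b upper triangular (i.e. b_{ij} = 0 whenever i > j). Then for every k with 1 ≤ k ≤ n and every choice of rows a_1, …, a_k ∈ {1, …, n}, the determinant of the k×k submatrix of the product g·b formed by the rows a_1, …, a_k and the columns 1, …, k equals (b_{11} b_{22} ⋯ b_{kk}) times the determinant of the k×k submatrix of g formed by the same rows a_1, …, a_k and the columns 1, …, k. -/
/-- For `b` upper triangular, the minor of `g * b` on rows `a₁,…,a_k` and the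
first `k` columns equals `b₁₁ ⋯ b_kk` times the corresponding minor of `g`. -/
theorem gaussian_minor_right_upper_triangular
    {R : Type*} [CommRing R] {n : ℕ} (hn : 1 ≤ n)
    (g b : Matrix (Fin n) (Fin n) R)
    (hb : ∀ i j : Fin n, j < i → b i j = 0)
    (k : ℕ) (hk1 : 1 ≤ k) (hkn : k ≤ n) (a : Fin k → Fin n) :
    ((g * b).submatrix a (Fin.castLE hkn)).det
      = (∏ j : Fin k, b (Fin.castLE hkn j) (Fin.castLE hkn j))
          * (g.submatrix a (Fin.castLE hkn)).det := by
  have key : (g * b).submatrix a (Fin.castLE hkn)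
      = (g.submatrix a (Fin.castLE hkn)) * (b.submatrix (Fin.castLE hkn) (Fin.castLE hkn)) := by
    ext i j
    simp only [Matrix.submatrix_apply, Matrix.mul_apply]
    rw [← Finset.sum_subset (Finset.subset_univ (Finset.univ.map (Fin.castLEEmb hkn)))]
    · rw [Finset.sum_map]
      rfl
    · intro m _ hm
      have hmk : ¬ (m : ℕ) < k := by
        intro h
        exact hm (Finset.mem_map.mpr ⟨⟨m, h⟩, Finset.mem_univ _, rfl⟩)
      have : (Fin.castLE hkn j) < m := by
        simp [Fin.lt_def]
        omega
      rw [hb m _ this, mul_zero]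
  have hbdet : (b.submatrix (Fin.castLE hkn) (Fin.castLE hkn)).det
      = ∏ j : Fin k, b (Fin.castLE hkn j) (Fin.castLE hkn j) := by
    rw [Matrix.det_of_upperTriangular]
    · rfl
    · intro i j hij
      exact hb _ _ (by simp only [Fin.lt_def, Fin.coe_castLE]; exact hij)
  rw [key, Matrix.det_mul, hbdet, mul_comm]
end

section
/- Let R be a commutative ring, n ≥ 1, and let b, g be n×n matrices over R with b upper triangular (i.e. b_{ij} = 0 whenever i > j). Then for every k with 1 ≤ k ≤ n, the determinant of the k×k submatrix of the product b·g formed by the rows n−k+1, …, n and the columns 1, …, k equals (b_{n−k+1,n−k+1} b_{n−k+2,n−k+2} ⋯ b_{nn}) times the determinant of the k×k submatrix of g formed by the rows n−k+1, …, n and the columns 1, …, k. -/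
/-- For `b` upper triangular, the minor of `b * g` on the last `k` rows
(rows `n-k+1, …, n`) and the first `k` columns equals
`b_{n-k+1,n-k+1} ⋯ b_{n,n}` times the corresponding minor of `g`. -/
theorem bottom_left_minor_left_upper_triangular
    {R : Type*} [CommRing R] {n : ℕ} (hn : 1 ≤ n)
    (b g : Matrix (Fin n) (Fin n) R)
    (hb : ∀ i j : Fin n, j < i → b i j = 0)
    (k : ℕ) (hk1 : 1 ≤ k) (hkn : k ≤ n) :
    ((b * g).submatrix
        (fun i : Fin k => (⟨n - k + (i : ℕ), by have := i.isLt; omega⟩ : Fin n))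
        (Fin.castLE hkn)).det
      = (∏ i : Fin k,
            b ⟨n - k + (i : ℕ), by have := i.isLt; omega⟩
              ⟨n - k + (i : ℕ), by have := i.isLt; omega⟩)
          * ((g.submatrix
                (fun i : Fin k => (⟨n - k + (i : ℕ), by have := i.isLt; omega⟩ : Fin n))
                (Fin.castLE hkn)).det) := by
  set row : Fin k → Fin n := fun i => ⟨n - k + (i : ℕ), by have := i.isLt; omega⟩ with hrow
  have hinj : Function.Injective row := by
    intro i j h
    have : n - k + (i : ℕ) = n - k + (j : ℕ) := congrArg Fin.val h
    exact Fin.ext (by omega)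
  set B : Matrix (Fin k) (Fin k) R := b.submatrix row row with hB
  set G : Matrix (Fin k) (Fin k) R := g.submatrix row (Fin.castLE hkn) with hG
  have key : (b * g).submatrix row (Fin.castLE hkn) = B * G := by
    ext i j
    simp only [Matrix.submatrix_apply, Matrix.mul_apply, hB, hG]
    have : ∑ m : Fin k, b (row i) (row m) * g (row m) (Fin.castLE hkn j)
        = ∑ l ∈ Finset.univ.map ⟨row, hinj⟩, b (row i) l * g l (Fin.castLE hkn j) := by
      rw [Finset.sum_map]; rfl
    rw [this]
    refine (Finset.sum_subset (Finset.subset_univ _) ?_).symm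
    intro l _ hl
    have hlval : (l : ℕ) < n - k := by
      by_contra h
      push_neg at h
      apply hl
      simp only [Finset.mem_map, Finset.mem_univ, Function.Embedding.coeFn_mk]
      exact ⟨⟨(l : ℕ) - (n - k), by have := l.isLt; omega⟩, trivial,
        Fin.ext (by simp [hrow]; omega)⟩
    have : b (row i) l = 0 := by
      apply hb
      show (l : ℕ) < (row i : ℕ)
      simp only [hrow]
      omega
    rw [this, zero_mul]
  have hBtri : B.BlockTriangular id := by
    intro i j hij
    apply hb
    show ((row j) : ℕ) < ((row i) : ℕ)
    have hji : (j : ℕ) < (i : ℕ) := hij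
    simp only [hrow]
    omega
  rw [key, Matrix.det_mul, Matrix.det_of_upperTriangular hBtri]
  rfl
end

section
/- Fix integers n ≥ 2 and 1 ≤ r ≤ n−1. Let S be the set of pairs (i,j) with 1 ≤ i,j ≤ n such that either (i ≤ r and r+1−i < j ≤ r) or (i > r and j ≤ r) or (i > r and j > n+r+1−i). Let R be the multivariate polynomial ring over a field K (or over ℤ) with one indeterminate x_{ij} for each (i,j) ∈ S, and let M be the n×n matrix over R with M_{ij} = x_{ij} if (i,j) ∈ S, M_{ij} = 1 if (i ≤ r and j = r+1−i) or (i > r and j = n+r+1−i), and M_{ij} = 0 otherwise. For 1 ≤ k ≤ n−1 let D_k = det of the k×k submatrix of M formed by rows n−k+1,…,n and columns 1,…,k, and let m = min(k, r, n−k, n−r). Then D_k is nonzero, every monomial occurring in D_k has total degree at least m, and D_k has a monomial of total degree exactly m (equivalently, D_k lies in 𝔪^m but not in 𝔪^{m+1}, where 𝔪 is the ideal of R generated by all the indeterminates x_{ij}). -/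
open Finset MvPolynomial

private lemma BLM_prodPow {R ι : Type*} [CommRing R] (I : Ideal R) (T : Finset ι)
    (f : ι → R) (h : ∀ q ∈ T, f q ∈ I) : (∏ q ∈ T, f q) ∈ I ^ T.card := by
  classical
  induction T using Finset.induction_on with
  | empty => simp
  | @insert x T hx ih =>
      rw [Finset.prod_insert hx, Finset.card_insert_of_notMem hx, pow_succ']
      exact Ideal.mul_mem_mul (h _ (Finset.mem_insert_self _ _))
        (ih fun q hq => h q (Finset.mem_insert_of_mem hq))

private lemma BLM_prodPowSubset {R ι : Type*} [CommRing R] (I : Ideal R) {s T : Finset ι}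
    (f : ι → R) (hT : T ⊆ s) (h : ∀ q ∈ T, f q ∈ I) : (∏ q ∈ s, f q) ∈ I ^ T.card := by
  classical
  rw [← Finset.prod_sdiff hT]
  exact Ideal.mul_mem_left _ _ (BLM_prodPow I T f h)

private def BLM_fv (a m k t : ℕ) : ℕ :=
  if t < a then a - 1 - t else if t < a + m then t else a + m + (k - 1) - t

private lemma BLM_fv_lt {a m k : ℕ} (H : a + m ≤ k) (hm : 1 ≤ m) {t : ℕ} (ht : t < k) :
    BLM_fv a m k t < k := by unfold BLM_fv; split_ifs <;> omega

private lemma BLM_fv_invol {a m k : ℕ} (H : a + m ≤ k) (hm : 1 ≤ m) {t : ℕ} (ht : t < k) :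
    BLM_fv a m k (BLM_fv a m k t) = t := by unfold BLM_fv; split_ifs <;> omega

private def BLM_f {k : ℕ} (a m : ℕ) (H : a + m ≤ k) (hm : 1 ≤ m) : Fin k → Fin k :=
  fun q => ⟨BLM_fv a m k q, BLM_fv_lt H hm q.isLt⟩

private lemma BLM_f_invol {k a m : ℕ} (H : a + m ≤ k) (hm : 1 ≤ m) :
    Function.Involutive (BLM_f (k := k) a m H hm) :=
  fun q => Fin.ext (BLM_fv_invol H hm q.isLt)

private noncomputable def BLM_g (K : Type*) [CommSemiring K] (n k a m : ℕ) (S : Fin n → Fin n → Prop) :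
    {p : Fin n × Fin n // S p.1 p.2} → Polynomial K :=
  fun v => if ((v.1.1 : ℕ) = n - k + (v.1.2 : ℕ) ∧ a ≤ (v.1.2 : ℕ) ∧ (v.1.2 : ℕ) < a + m)
    then Polynomial.X else 0

private noncomputable def BLM_c (K : Type*) [CommSemiring K] (k a m : ℕ) : Fin k → Polynomial K :=
  fun p => if (a ≤ (p : ℕ) ∧ (p : ℕ) < a + m) then Polynomial.X else 1


private lemma BLM_L1 {k a m pv qv : ℕ}
    (h : pv = qv ∧ a ≤ qv ∧ qv < a + m) : BLM_fv a m k pv = qv := by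
  unfold BLM_fv; split_ifs <;> omega

private lemma BLM_L2 {n r k a m pv qv : ℕ} (ha : a = k + r - n) (habm : a + m + (k - r) = k)
    (hm1 : 1 ≤ m) (hn : 2 ≤ n) (hr1 : 1 ≤ r) (hr2 : r ≤ n - 1) (hk1 : 1 ≤ k) (hk2 : k ≤ n - 1)
    (hpk : pv < k) (hqk : qv < k)
    (hfv : BLM_fv a m k pv = qv)
    (hg : ¬(pv = qv ∧ a ≤ qv ∧ qv < a + m))
    (hSar : (n - k + pv + 1 ≤ r ∧ r + 1 - (n - k + pv + 1) < qv + 1 ∧ qv + 1 ≤ r) ∨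
      (r < n - k + pv + 1 ∧ qv + 1 ≤ r) ∨
      (r < n - k + pv + 1 ∧ n + r + 1 - (n - k + pv + 1) < qv + 1)) : False := by
  unfold BLM_fv at hfv; split_ifs at hfv <;> omega

private lemma BLM_L3a {n r k a m pv qv : ℕ} (ha : a = k + r - n) (habm : a + m + (k - r) = k)
    (hm1 : 1 ≤ m) (hn : 2 ≤ n) (hr1 : 1 ≤ r) (hr2 : r ≤ n - 1) (hk1 : 1 ≤ k) (hk2 : k ≤ n - 1)
    (hpk : pv < k) (hqk : qv < k)
    (h1 : (n - k + pv + 1 ≤ r ∧ qv + 1 = r + 1 - (n - k + pv + 1)) ∨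
      (r < n - k + pv + 1 ∧ qv + 1 = n + r + 1 - (n - k + pv + 1))) :
    BLM_fv a m k pv = qv := by
  unfold BLM_fv; split_ifs <;> omega

private lemma BLM_L3b {n r k a m pv qv : ℕ} (ha : a = k + r - n) (habm : a + m + (k - r) = k)
    (hm1 : 1 ≤ m) (hn : 2 ≤ n) (hr1 : 1 ≤ r) (hr2 : r ≤ n - 1) (hk1 : 1 ≤ k) (hk2 : k ≤ n - 1)
    (hpk : pv < k) (hqk : qv < k)
    (h1 : (n - k + pv + 1 ≤ r ∧ qv + 1 = r + 1 - (n - k + pv + 1)) ∨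
      (r < n - k + pv + 1 ∧ qv + 1 = n + r + 1 - (n - k + pv + 1))) :
    ¬ (a ≤ pv ∧ pv < a + m) := by
  omega

private lemma BLM_L4 {n r k a m pv qv : ℕ} (ha : a = k + r - n) (habm : a + m + (k - r) = k)
    (hm1 : 1 ≤ m) (hn : 2 ≤ n) (hr1 : 1 ≤ r) (hr2 : r ≤ n - 1) (hk1 : 1 ≤ k) (hk2 : k ≤ n - 1)
    (hpk : pv < k) (hqk : qv < k)
    (hfv : BLM_fv a m k pv = qv)
    (h1 : ¬ ((n - k + pv + 1 ≤ r ∧ qv + 1 = r + 1 - (n - k + pv + 1)) ∨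
      (r < n - k + pv + 1 ∧ qv + 1 = n + r + 1 - (n - k + pv + 1))))
    (hs : ¬ ((n - k + pv + 1 ≤ r ∧ r + 1 - (n - k + pv + 1) < qv + 1 ∧ qv + 1 ≤ r) ∨
      (r < n - k + pv + 1 ∧ qv + 1 ≤ r) ∨
      (r < n - k + pv + 1 ∧ n + r + 1 - (n - k + pv + 1) < qv + 1))) : False := by
  unfold BLM_fv at hfv
  split_ifs at hfv
  · exact h1 (Or.inl ⟨by omega, by omega⟩)
  · exact hs (Or.inr (Or.inl ⟨by omega, by omega⟩))
  · exact h1 (Or.inr ⟨by omega, by omega⟩)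

set_option maxHeartbeats 1000000 in
/-- Let `M` be the generic matrix of the affine patch `w₀^P B⁻ B` of
`SL_n/B` (ones on the two shifted anti-diagonals, independent indeterminates `x_{ij}`
at the positions of `S`, zeros elsewhere).  For `1 ≤ k ≤ n - 1`, the bottom-left
`k × k` minor `D_k` of `M` is nonzero, lies in `𝔪^m`, and does not lie in `𝔪^{m+1}`,
where `m = min(k, r, n-k, n-r)` and `𝔪` is the ideal generated by the indeterminates.
(Indices `i, j` of `Fin n` are translated to the 1-indexed `i+1, j+1` of the paper.) -/
theorem bottom_left_minor_order_of_vanishing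
    {K : Type*} [Field K] (n r : ℕ) (hn : 2 ≤ n) (hr1 : 1 ≤ r) (hr2 : r ≤ n - 1)
    (S : Fin n → Fin n → Prop)
    (hS : ∀ i j : Fin n, S i j ↔
      (((i : ℕ) + 1 ≤ r ∧ r + 1 - ((i : ℕ) + 1) < (j : ℕ) + 1 ∧ (j : ℕ) + 1 ≤ r) ∨
       (r < (i : ℕ) + 1 ∧ (j : ℕ) + 1 ≤ r) ∨
       (r < (i : ℕ) + 1 ∧ n + r + 1 - ((i : ℕ) + 1) < (j : ℕ) + 1)))
    (M : Matrix (Fin n) (Fin n) (MvPolynomial {p : Fin n × Fin n // S p.1 p.2} K))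
    (hMX : ∀ (i j : Fin n) (h : S i j), M i j = MvPolynomial.X ⟨(i, j), h⟩)
    (hM1 : ∀ i j : Fin n,
      (((i : ℕ) + 1 ≤ r ∧ (j : ℕ) + 1 = r + 1 - ((i : ℕ) + 1)) ∨
       (r < (i : ℕ) + 1 ∧ (j : ℕ) + 1 = n + r + 1 - ((i : ℕ) + 1))) → M i j = 1)
    (hM0 : ∀ i j : Fin n, ¬ S i j →
      ¬ (((i : ℕ) + 1 ≤ r ∧ (j : ℕ) + 1 = r + 1 - ((i : ℕ) + 1)) ∨
         (r < (i : ℕ) + 1 ∧ (j : ℕ) + 1 = n + r + 1 - ((i : ℕ) + 1))) → M i j = 0)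
    (k : ℕ) (hk1 : 1 ≤ k) (hk2 : k ≤ n - 1)
    (D : MvPolynomial {p : Fin n × Fin n // S p.1 p.2} K)
    (hD : D = (M.submatrix
        (fun i : Fin k => (⟨n - k + (i : ℕ), by have := i.isLt; omega⟩ : Fin n))
        (Fin.castLE (by omega))).det)
    (m : ℕ) (hm : m = min (min k r) (min (n - k) (n - r)))
    (𝔪 : Ideal (MvPolynomial {p : Fin n × Fin n // S p.1 p.2} K))
    (h𝔪 : 𝔪 = Ideal.span (Set.range MvPolynomial.X)) :
    D ≠ 0 ∧ D ∈ 𝔪 ^ m ∧ D ∉ 𝔪 ^ (m + 1) := by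
  classical
  subst h𝔪
  set a := k + r - n with ha
  have hamk : a + m ≤ k := by omega
  have hm1 : 1 ≤ m := by omega
  have habm : a + m + (k - r) = k := by omega
  clear hm
  set ρ : Fin k → Fin n := fun i => ⟨n - k + (i : ℕ), by have := i.isLt; omega⟩ with hρ
  set γ : Fin k → Fin n := Fin.castLE (by omega) with hγ
  have hD' : D = (M.submatrix ρ γ).det := hD
  subst hD'
  -- Part 1: membership in 𝔪 ^ m
  have hmem : (M.submatrix ρ γ).det ∈
      (Ideal.span (Set.range (X : _ → MvPolynomial {p : Fin n × Fin n // S p.1 p.2} K))) ^ m := by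
    rw [Matrix.det_apply]
    refine Ideal.sum_mem _ fun σ _ => ?_
    rw [Units.smul_def, zsmul_eq_mul]
    refine Ideal.mul_mem_left _ _ ?_
    by_cases hz : ∃ q : Fin k, M (ρ (σ q)) (γ q) = 0
    · obtain ⟨q, hq⟩ := hz
      have h0 : (∏ i : Fin k, (M.submatrix ρ γ) (σ i) i) = 0 :=
        Finset.prod_eq_zero (Finset.mem_univ q) (by rw [Matrix.submatrix_apply]; exact hq)
      rw [h0]; exact Ideal.zero_mem _
    · push_neg at hz
      set T : Finset (Fin k) := univ.filter (fun q => S (ρ (σ q)) (γ q)) with hTdef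
      have hTcard : m ≤ T.card := by
        set O : Finset (Fin k) := univ.filter (fun q =>
          ((n - k + ((σ q : Fin k) : ℕ) + 1 ≤ r ∧
              (q : ℕ) + 1 = r + 1 - (n - k + ((σ q : Fin k) : ℕ) + 1)) ∨
           (r < n - k + ((σ q : Fin k) : ℕ) + 1 ∧
              (q : ℕ) + 1 = n + r + 1 - (n - k + ((σ q : Fin k) : ℕ) + 1)))) with hOdef
        have hcover : (univ : Finset (Fin k)) ⊆ T ∪ O := by
          intro q _
          by_cases hSq : S (ρ (σ q)) (γ q)
          · exact Finset.mem_union_left _ (Finset.mem_filter.2 ⟨Finset.mem_univ _, hSq⟩)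
          · by_cases hOq :
              ((n - k + ((σ q : Fin k) : ℕ) + 1 ≤ r ∧
                  (q : ℕ) + 1 = r + 1 - (n - k + ((σ q : Fin k) : ℕ) + 1)) ∨
               (r < n - k + ((σ q : Fin k) : ℕ) + 1 ∧
                  (q : ℕ) + 1 = n + r + 1 - (n - k + ((σ q : Fin k) : ℕ) + 1)))
            · exact Finset.mem_union_right _ (Finset.mem_filter.2 ⟨Finset.mem_univ _, hOq⟩)
            · exact absurd (hM0 (ρ (σ q)) (γ q) hSq hOq) (hz q)
        have hOle : O.card ≤ a + (k - r) := by
          have hsplit : O ⊆ (univ.filter fun q : Fin k => (q : ℕ) < a) ∪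
              (univ.filter fun q : Fin k => r ≤ (q : ℕ)) := by
            intro q hq
            rw [hOdef, Finset.mem_filter] at hq
            have hσq := (σ q).isLt
            have hqk := q.isLt
            rcases hq.2 with ⟨h1, h2⟩ | ⟨h1, h2⟩
            · exact Finset.mem_union_left _ (Finset.mem_filter.2 ⟨Finset.mem_univ _, by omega⟩)
            · exact Finset.mem_union_right _ (Finset.mem_filter.2 ⟨Finset.mem_univ _, by omega⟩)
          have h1 : (univ.filter fun q : Fin k => (q : ℕ) < a).card ≤ a := by
            have := Finset.card_le_card_of_injOn (s := univ.filter fun q : Fin k => (q : ℕ) < a) (t := Finset.range a) (fun q : Fin k => (q : ℕ))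
              (fun q hq => by
                rw [Finset.mem_coe, Finset.mem_filter] at hq; exact Finset.mem_coe.2 (Finset.mem_range.2 hq.2))
              (fun q _ p _ h => Fin.ext h)
            simpa using this
          have h2 : (univ.filter fun q : Fin k => r ≤ (q : ℕ)).card ≤ k - r := by
            have := Finset.card_le_card_of_injOn (s := univ.filter fun q : Fin k => r ≤ (q : ℕ)) (t := Finset.range (k - r))
              (fun q : Fin k => (q : ℕ) - r)
              (fun q hq => by
                rw [Finset.mem_coe, Finset.mem_filter] at hq
                have := q.isLt
                exact Finset.mem_coe.2 <| Finset.mem_range.2 (show (q : ℕ) - r < k - r by omega))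
              (fun q hq p hp h => by
                simp only [Finset.coe_filter, Set.mem_setOf_eq] at hq hp
                have h' : (q : ℕ) - r = (p : ℕ) - r := h
                exact Fin.ext (by omega))
            simpa using this
          calc O.card ≤ _ := Finset.card_le_card hsplit
            _ ≤ _ := Finset.card_union_le _ _
            _ ≤ a + (k - r) := by omega
        have hku : (univ : Finset (Fin k)).card = k := by simp
        have h3 : (univ : Finset (Fin k)).card ≤ T.card + O.card :=
          le_trans (Finset.card_le_card hcover) (Finset.card_union_le _ _)
        omega
      obtain ⟨T', hT'sub, hT'card⟩ := Finset.exists_subset_card_eq hTcard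
      rw [← hT'card]
      refine BLM_prodPowSubset _ _ (Finset.subset_univ T') ?_
      intro q hq
      have hqT := hT'sub hq
      rw [hTdef, Finset.mem_filter] at hqT
      rw [Matrix.submatrix_apply, hMX _ _ hqT.2]
      exact Ideal.subset_span ⟨_, rfl⟩
  -- Part 2: the evaluation map
  set φ : MvPolynomial {p : Fin n × Fin n // S p.1 p.2} K →+* Polynomial K :=
    MvPolynomial.eval₂Hom (Polynomial.C) (BLM_g K n k a m S) with hφdef
  set σ₀ : Equiv.Perm (Fin k) := Function.Involutive.toPerm _ (BLM_f_invol hamk hm1) with hσ₀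
  have hA : ∀ p q : Fin k,
      φ (M (ρ p) (γ q)) = if BLM_f a m hamk hm1 p = q then BLM_c K k a m p else 0 := by
    intro p q
    have hpk := p.isLt
    have hqk := q.isLt
    have hSiff : S (ρ p) (γ q) ↔
        ((n - k + (p : ℕ) + 1 ≤ r ∧ r + 1 - (n - k + (p : ℕ) + 1) < (q : ℕ) + 1 ∧
            (q : ℕ) + 1 ≤ r) ∨
         (r < n - k + (p : ℕ) + 1 ∧ (q : ℕ) + 1 ≤ r) ∨
         (r < n - k + (p : ℕ) + 1 ∧ n + r + 1 - (n - k + (p : ℕ) + 1) < (q : ℕ) + 1)) :=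
      hS (ρ p) (γ q)
    have hM1' : ((n - k + (p : ℕ) + 1 ≤ r ∧
            (q : ℕ) + 1 = r + 1 - (n - k + (p : ℕ) + 1)) ∨
          (r < n - k + (p : ℕ) + 1 ∧
            (q : ℕ) + 1 = n + r + 1 - (n - k + (p : ℕ) + 1))) → M (ρ p) (γ q) = 1 :=
      hM1 (ρ p) (γ q)
    have hM0' : ¬ S (ρ p) (γ q) → ¬ ((n - k + (p : ℕ) + 1 ≤ r ∧
            (q : ℕ) + 1 = r + 1 - (n - k + (p : ℕ) + 1)) ∨
          (r < n - k + (p : ℕ) + 1 ∧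
            (q : ℕ) + 1 = n + r + 1 - (n - k + (p : ℕ) + 1))) → M (ρ p) (γ q) = 0 :=
      hM0 (ρ p) (γ q)
    by_cases hSpq : S (ρ p) (γ q)
    · rw [hMX _ _ hSpq, hφdef, MvPolynomial.eval₂Hom_X']
      have hgval : BLM_g K n k a m S ⟨(ρ p, γ q), hSpq⟩
          = if (n - k + (p : ℕ) = n - k + (q : ℕ) ∧ a ≤ (q : ℕ) ∧ (q : ℕ) < a + m)
            then Polynomial.X else 0 := rfl
      rw [hgval]
      by_cases hg : ((p : ℕ) = (q : ℕ) ∧ a ≤ (q : ℕ) ∧ (q : ℕ) < a + m)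
      · rw [if_pos ⟨by omega, hg.2.1, hg.2.2⟩]
        have hf : BLM_f a m hamk hm1 p = q := Fin.ext (BLM_L1 hg)
        rw [if_pos hf]
        show _ = BLM_c K k a m p
        unfold BLM_c
        rw [if_pos (show a ≤ (p : ℕ) ∧ (p : ℕ) < a + m by omega)]
      · rw [if_neg (fun hcon => hg ⟨Nat.add_left_cancel hcon.1, hcon.2.1, hcon.2.2⟩)]
        by_cases hf : BLM_f a m hamk hm1 p = q
        · exact absurd (hSiff.1 hSpq)
            (fun hSar => BLM_L2 ha habm hm1 hn hr1 hr2 hk1 hk2 hpk hqk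
              (congrArg Fin.val hf) hg hSar)
        · rw [if_neg hf]
    · by_cases h1 : ((n - k + (p : ℕ) + 1 ≤ r ∧
            (q : ℕ) + 1 = r + 1 - (n - k + (p : ℕ) + 1)) ∨
          (r < n - k + (p : ℕ) + 1 ∧
            (q : ℕ) + 1 = n + r + 1 - (n - k + (p : ℕ) + 1)))
      · rw [hM1' h1, map_one]
        have hf : BLM_f a m hamk hm1 p = q :=
          Fin.ext (BLM_L3a ha habm hm1 hn hr1 hr2 hk1 hk2 hpk hqk h1)
        rw [if_pos hf]
        show _ = BLM_c K k a m p
        unfold BLM_c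
        rw [if_neg (BLM_L3b (m := m) ha habm hm1 hn hr1 hr2 hk1 hk2 hpk hqk h1)]
      · rw [hM0' hSpq h1, map_zero]
        have hf : BLM_f a m hamk hm1 p ≠ q := fun hf =>
          BLM_L4 ha habm hm1 hn hr1 hr2 hk1 hk2 hpk hqk (congrArg Fin.val hf) h1
            (fun hs => hSpq (hSiff.2 hs))
        rw [if_neg hf]
  have hmap : (M.submatrix ρ γ).map φ
      = Matrix.diagonal (BLM_c K k a m) * Equiv.Perm.permMatrix (Polynomial K) σ₀ := by
    ext p q
    rw [Matrix.map_apply, Matrix.submatrix_apply, hA p q, Matrix.diagonal_mul]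
    have hperm : Equiv.Perm.permMatrix (Polynomial K) σ₀ p q
        = if BLM_f a m hamk hm1 p = q then 1 else 0 := by
      by_cases hf : BLM_f a m hamk hm1 p = q
      · rw [if_pos hf]
        simp [Equiv.Perm.permMatrix, PEquiv.toMatrix_apply, Equiv.toPEquiv_apply, hσ₀,
          Function.Involutive.coe_toPerm, hf]
      · rw [if_neg hf]
        simp only [Equiv.Perm.permMatrix, PEquiv.toMatrix_apply, Equiv.toPEquiv_apply,
          Option.mem_def, Option.some.injEq, hσ₀, Function.Involutive.coe_toPerm]
        exact if_neg hf
    rw [hperm]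
    by_cases hf : BLM_f a m hamk hm1 p = q
    · rw [if_pos hf, if_pos hf, mul_one]
    · rw [if_neg hf, if_neg hf, mul_zero]
  have hcard : (univ.filter fun p : Fin k => a ≤ (p : ℕ) ∧ (p : ℕ) < a + m).card = m := by
    have hbij : (univ.filter fun p : Fin k => a ≤ (p : ℕ) ∧ (p : ℕ) < a + m).card
        = (Finset.Ico a (a + m)).card := by
      refine Finset.card_bij (fun p _ => (p : ℕ)) ?_ ?_ ?_
      · intro p hp
        rw [Finset.mem_filter] at hp
        exact Finset.mem_Ico.2 ⟨hp.2.1, hp.2.2⟩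
      · intro p _ q _ h
        exact Fin.ext h
      · intro t ht
        rw [Finset.mem_Ico] at ht
        exact ⟨⟨t, by omega⟩, Finset.mem_filter.2 ⟨Finset.mem_univ _, by simpa using ht⟩, rfl⟩
    rw [hbij, Nat.card_Ico]
    omega
  have hprodc : (∏ p : Fin k, BLM_c K k a m p) = Polynomial.X ^ m := by
    have h1 : ∀ p ∈ univ.filter (fun p : Fin k => a ≤ (p : ℕ) ∧ (p : ℕ) < a + m),
        BLM_c K k a m p = Polynomial.X := by
      intro p hp; rw [Finset.mem_filter] at hp
      unfold BLM_c; rw [if_pos hp.2]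
    have h2 : ∀ p ∈ univ.filter (fun p : Fin k => ¬ (a ≤ (p : ℕ) ∧ (p : ℕ) < a + m)),
        BLM_c K k a m p = 1 := by
      intro p hp; rw [Finset.mem_filter] at hp
      unfold BLM_c; rw [if_neg hp.2]
    rw [← Finset.prod_filter_mul_prod_filter_not univ
      (fun p : Fin k => a ≤ (p : ℕ) ∧ (p : ℕ) < a + m) (BLM_c K k a m)]
    rw [Finset.prod_congr rfl h1, Finset.prod_congr rfl h2, Finset.prod_const,
      Finset.prod_const_one, mul_one, hcard]
  have hφcases : φ ((M.submatrix ρ γ).det) = Polynomial.X ^ m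
      ∨ φ ((M.submatrix ρ γ).det) = -(Polynomial.X ^ m) := by
    rw [RingHom.map_det, RingHom.mapMatrix_apply, hmap, Matrix.det_mul, Matrix.det_diagonal,
      hprodc, Matrix.det_permutation]
    rcases Int.units_eq_one_or (Equiv.Perm.sign σ₀) with hs | hs
    · left; rw [hs]; simp
    · right; rw [hs]; simp
  have hφne : φ ((M.submatrix ρ γ).det) ≠ 0 := by
    rcases hφcases with h | h <;> rw [h]
    · exact pow_ne_zero _ Polynomial.X_ne_zero
    · exact neg_ne_zero.2 (pow_ne_zero _ Polynomial.X_ne_zero)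
  refine ⟨?_, hmem, ?_⟩
  · intro h0
    apply hφne
    rw [h0, map_zero]
  · intro hDm
    have hle : (Ideal.span (Set.range (X : _ → MvPolynomial {p : Fin n × Fin n // S p.1 p.2} K))).map φ
        ≤ Ideal.span {Polynomial.X} := by
      rw [Ideal.map_span]
      refine Ideal.span_le.2 ?_
      rintro _ ⟨_, ⟨v, rfl⟩, rfl⟩
      show φ (X v) ∈ _
      rw [hφdef, MvPolynomial.eval₂Hom_X']
      unfold BLM_g
      split_ifs
      · exact Ideal.subset_span rfl
      · exact Ideal.zero_mem _
    have hmapped : φ ((M.submatrix ρ γ).det)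
        ∈ (Ideal.span {Polynomial.X} : Ideal (Polynomial K)) ^ (m + 1) := by
      have h := Ideal.mem_map_of_mem φ hDm
      rw [Ideal.map_pow] at h
      exact Ideal.pow_right_mono hle (m + 1) h
    rw [Ideal.span_singleton_pow, Ideal.mem_span_singleton] at hmapped
    have hdvd := Polynomial.natDegree_le_of_dvd hmapped hφne
    rw [Polynomial.natDegree_X_pow] at hdvd
    rcases hφcases with h | h <;> rw [h] at hdvd <;>
      simp only [Polynomial.natDegree_neg, Polynomial.natDegree_X_pow] at hdvd <;> omega
end

section
/- Fix integers n ≥ 2 and 1 ≤ r ≤ n−1. Let S be the set of pairs (i,j) with 1 ≤ i,j ≤ n such that either (i ≤ r and r+1−i < j ≤ r) or (i > r and j ≤ r) or (i > r and j > n+r+1−i). Let R be the multivariate polynomial ring over a field K with one indeterminate x_{ij} for each (i,j) ∈ S, and let M be the n×n matrix over R with M_{ij} = x_{ij} if (i,j) ∈ S, M_{ij} = 1 if (i ≤ r and j = r+1−i) or (i > r and j = n+r+1−i), and M_{ij} = 0 otherwise. Let Q = ∏_{k=1}^{n−1} D_k, where D_k is the determinant of the k×k submatrix of M formed by rows n−k+1,…,n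 and columns 1,…,k. Then Q is nonzero, lies in 𝔪^{r(n−r)}, and does not lie in 𝔪^{r(n−r)+1}, where 𝔪 is the ideal of R generated by all the indeterminates x_{ij}. -/
open Finset MvPolynomial

lemma aux_prod_mem_pow {R : Type*} [CommRing R] (I : Ideal R) {α : Type*} (s : Finset α)
    (f : α → R) (e : α → ℕ) (h : ∀ a ∈ s, f a ∈ I ^ e a) :
    ∏ a ∈ s, f a ∈ I ^ (∑ a ∈ s, e a) := by
  classical
  induction s using Finset.induction with
  | empty => simp [Ideal.one_eq_top]
  | @insert a s' hx ih =>
    rw [Finset.prod_insert hx, Finset.sum_insert hx, pow_add]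
    exact Ideal.mul_mem_mul (h a (mem_insert_self a s'))
      (ih fun b hb => h b (mem_insert_of_mem hb))

lemma aux_prod_mem_pow_card {R : Type*} [CommRing R] (I : Ideal R) {α : Type*} (s : Finset α)
    (f : α → R) (h : ∀ a ∈ s, f a ∈ I) : ∏ a ∈ s, f a ∈ I ^ s.card := by
  have := aux_prod_mem_pow I s f (fun _ => 1) (by simpa using h)
  simpa using this

lemma aux_fin_filter_card (k a b : ℕ) :
    ((Finset.univ : Finset (Fin k)).filter fun ℓ : Fin k => a ≤ (ℓ : ℕ) ∧ (ℓ : ℕ) < b).card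
      = min b k - a := by
  classical
  rw [← Nat.card_Ico a (min b k)]
  apply Finset.card_bij (fun (ℓ : Fin k) _ => (ℓ : ℕ))
  · intro ℓ hl; simp only [mem_filter] at hl; simp only [Finset.mem_Ico]; omega
  · intro ℓ _ ℓ' _ h; exact Fin.ext h
  · intro x hx
    simp only [Finset.mem_Ico] at hx
    refine ⟨⟨x, by omega⟩, ?_, rfl⟩
    simp only [Finset.mem_filter, Finset.mem_univ, true_and]
    omega

set_option maxHeartbeats 2000000 in
lemma aux_coeff_ne_zero
    {K : Type*} [Field K] (n r : ℕ) (hn : 2 ≤ n) (hr1 : 1 ≤ r) (hr2 : r ≤ n - 1)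
    (S : Fin n → Fin n → Prop)
    (hS : ∀ i j : Fin n, S i j ↔
      (((i : ℕ) + 1 ≤ r ∧ r + 1 - ((i : ℕ) + 1) < (j : ℕ) + 1 ∧ (j : ℕ) + 1 ≤ r) ∨
       (r < (i : ℕ) + 1 ∧ (j : ℕ) + 1 ≤ r) ∨
       (r < (i : ℕ) + 1 ∧ n + r + 1 - ((i : ℕ) + 1) < (j : ℕ) + 1)))
    (M : Matrix (Fin n) (Fin n) (MvPolynomial {p : Fin n × Fin n // S p.1 p.2} K))
    (hMX : ∀ (i j : Fin n) (h : S i j), M i j = MvPolynomial.X ⟨(i, j), h⟩)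
    (hM1 : ∀ i j : Fin n,
      (((i : ℕ) + 1 ≤ r ∧ (j : ℕ) + 1 = r + 1 - ((i : ℕ) + 1)) ∨
       (r < (i : ℕ) + 1 ∧ (j : ℕ) + 1 = n + r + 1 - ((i : ℕ) + 1))) → M i j = 1)
    (hM0 : ∀ i j : Fin n, ¬ S i j →
      ¬ (((i : ℕ) + 1 ≤ r ∧ (j : ℕ) + 1 = r + 1 - ((i : ℕ) + 1)) ∨
         (r < (i : ℕ) + 1 ∧ (j : ℕ) + 1 = n + r + 1 - ((i : ℕ) + 1))) → M i j = 0)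
    (D : ℕ → MvPolynomial {p : Fin n × Fin n // S p.1 p.2} K)
    (hD : ∀ (k : ℕ) (hk : k ≤ n), D k = (M.submatrix
        (fun i : Fin k => (⟨n - k + (i : ℕ),
          Nat.lt_of_lt_of_le (Nat.add_lt_add_left i.isLt (n - k)) (by omega)⟩ : Fin n))
        (Fin.castLE hk)).det)
    (k : ℕ) (hk1 : 1 ≤ k) (hk2 : k ≤ n - 1) :
    (Polynomial.coeff ((MvPolynomial.aeval
        (fun s => Polynomial.C (MvPolynomial.X s) * Polynomial.X :
          {p : Fin n × Fin n // S p.1 p.2} →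
            Polynomial (MvPolynomial {p : Fin n × Fin n // S p.1 p.2} K))) (D k))
      (k - (k - r) - (k - (n - r)))) ≠ 0 := by
  classical
  have hkn : k ≤ n := by omega
  set T : MvPolynomial {p : Fin n × Fin n // S p.1 p.2} K →ₐ[K]
      Polynomial (MvPolynomial {p : Fin n × Fin n // S p.1 p.2} K) :=
    MvPolynomial.aeval (fun s => Polynomial.C (MvPolynomial.X s) * Polynomial.X) with hT
  set A := k - (n - r) with hA
  -- the ℕ-level permutation
  set g : ℕ → ℕ := fun x => if x < A then A - 1 - x else if x < r then x else r + k - 1 - x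
    with hg
  have hgb : ∀ x, x < k → g x < k := by
    intro x hx; simp only [hg]; split_ifs <;> omega
  have hgg : ∀ x, x < k → g (g x) = x := by
    intro x hx; simp only [hg]; split_ifs <;> omega
  set row : Fin k → Fin n :=
    (fun i : Fin k => (⟨n - k + (i : ℕ), by have := i.isLt; omega⟩ : Fin n)) with hrowdef
  set fa : Fin k → Fin k := fun ℓ => ⟨g ℓ, hgb ℓ ℓ.isLt⟩ with hfadef
  have hfa : Function.Involutive fa := fun ℓ => Fin.ext (hgg ℓ ℓ.isLt)
  set σstar : Equiv.Perm (Fin k) := Function.Involutive.toPerm fa hfa with hσstar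
  set Kept : {p : Fin n × Fin n // S p.1 p.2} → Prop := fun s =>
    ((s.1.1 : ℕ) = n - k + (s.1.2 : ℕ) ∧ A ≤ (s.1.2 : ℕ) ∧ (s.1.2 : ℕ) < r ∧ (s.1.2 : ℕ) < k)
    with hKept
  set ψ : MvPolynomial {p : Fin n × Fin n // S p.1 p.2} K →ₐ[K]
      MvPolynomial {p : Fin n × Fin n // S p.1 p.2} K :=
    MvPolynomial.aeval (fun s => if Kept s then MvPolynomial.X s else 0) with hψ
  have hSrem : ∀ ℓ : Fin k, A ≤ (ℓ : ℕ) → (ℓ : ℕ) < r → S (row ℓ) (Fin.castLE hkn ℓ) := by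
    intro ℓ h1 h2
    have hℓ := ℓ.isLt
    rw [hS]
    refine Or.inr (Or.inl ⟨?_, ?_⟩)
    · show r < n - k + (ℓ : ℕ) + 1
      omega
    · show (ℓ : ℕ) + 1 ≤ r
      omega
  set E : Fin k → MvPolynomial {p : Fin n × Fin n // S p.1 p.2} K := fun ℓ =>
    if h : A ≤ (ℓ : ℕ) ∧ (ℓ : ℕ) < r then
      MvPolynomial.X ⟨(row ℓ, Fin.castLE hkn ℓ), hSrem ℓ h.1 h.2⟩ else 1 with hE
  have hentry : ∀ ℓ ℓ' : Fin k,
      ψ (M (row ℓ) (Fin.castLE hkn ℓ')) = if fa ℓ = ℓ' then E ℓ else 0 := by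
    intro ℓ ℓ'
    have hℓ := ℓ.isLt; have hℓ' := ℓ'.isLt
    have hrow : ((row ℓ : Fin n) : ℕ) = n - k + (ℓ : ℕ) := rfl
    have hcol : ((Fin.castLE hkn ℓ' : Fin n) : ℕ) = (ℓ' : ℕ) := rfl
    by_cases hone : ((n - k + (ℓ : ℕ) + 1 ≤ r ∧ (ℓ' : ℕ) + 1 = r + 1 - (n - k + (ℓ : ℕ) + 1)) ∨
        (r < n - k + (ℓ : ℕ) + 1 ∧ (ℓ' : ℕ) + 1 = n + r + 1 - (n - k + (ℓ : ℕ) + 1)))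
    · rw [hM1 _ _ hone, map_one]
      have hfaeq : g (ℓ : ℕ) = (ℓ' : ℕ) ∧ ¬(A ≤ (ℓ : ℕ) ∧ (ℓ : ℕ) < r) := by
        simp only [hg]; split_ifs <;> omega
      rw [if_pos (Fin.ext hfaeq.1 : fa ℓ = ℓ')]
      simp only [hE]
      rw [dif_neg hfaeq.2]
    · by_cases hSij : S (row ℓ) (Fin.castLE hkn ℓ')
      · have hsnum := (hS (row ℓ) (Fin.castLE hkn ℓ')).mp hSij
        rw [hrow, hcol] at hsnum
        rw [hMX _ _ hSij]
        have hψX : ψ (MvPolynomial.X (⟨(row ℓ, Fin.castLE hkn ℓ'), hSij⟩ :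
            {p : Fin n × Fin n // S p.1 p.2})) =
            if Kept ⟨(row ℓ, Fin.castLE hkn ℓ'), hSij⟩ then
              MvPolynomial.X ⟨(row ℓ, Fin.castLE hkn ℓ'), hSij⟩ else 0 := by
          rw [hψ]; simp only [MvPolynomial.aeval_X]
        rw [hψX]
        by_cases hK : Kept ⟨(row ℓ, Fin.castLE hkn ℓ'), hSij⟩
        · have hKnum := hK
          simp only [hKept, Fin.coe_castLE] at hKnum
          have hℓeq : ℓ' = ℓ := Fin.ext (by omega)
          subst hℓeq
          rw [if_pos hK]
          have hfaeq : g (ℓ' : ℕ) = (ℓ' : ℕ) := by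
            simp only [hg]; split_ifs <;> omega
          rw [if_pos (Fin.ext hfaeq : fa ℓ' = ℓ')]
          simp only [hE]
          rw [dif_pos (⟨hKnum.2.1, hKnum.2.2.1⟩ : A ≤ (ℓ' : ℕ) ∧ (ℓ' : ℕ) < r)]
        · have hKnum := hK
          simp only [hKept, Fin.coe_castLE] at hKnum
          rw [if_neg hK, if_neg]
          intro heq
          have hgval : g (ℓ : ℕ) = (ℓ' : ℕ) := show g (ℓ : ℕ) = (ℓ' : ℕ) from congrArg Fin.val heq
          simp only [hg] at hgval
          split_ifs at hgval <;> omega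
      · rw [hM0 _ _ hSij hone, map_zero, if_neg]
        have hns : ¬ ((n - k + (ℓ : ℕ) + 1 ≤ r ∧ r + 1 - (n - k + (ℓ : ℕ) + 1) < (ℓ' : ℕ) + 1 ∧
              (ℓ' : ℕ) + 1 ≤ r) ∨
            (r < n - k + (ℓ : ℕ) + 1 ∧ (ℓ' : ℕ) + 1 ≤ r) ∨
            (r < n - k + (ℓ : ℕ) + 1 ∧ n + r + 1 - (n - k + (ℓ : ℕ) + 1) < (ℓ' : ℕ) + 1)) :=
          fun h => hSij ((hS (row ℓ) (Fin.castLE hkn ℓ')).mpr h)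
        intro heq
        have hgval : g (ℓ : ℕ) = (ℓ' : ℕ) := show g (ℓ : ℕ) = (ℓ' : ℕ) from congrArg Fin.val heq
        simp only [hg] at hgval
        split_ifs at hgval <;> omega
  -- commutation of T and ψ
  have hcomm : ∀ p, (T p).map (ψ : MvPolynomial {p : Fin n × Fin n // S p.1 p.2} K →+*
      MvPolynomial {p : Fin n × Fin n // S p.1 p.2} K) = T (ψ p) := by
    have h : (Polynomial.mapAlgHom ψ).comp T = T.comp ψ := by
      apply MvPolynomial.algHom_ext
      intro s
      have h2 : ψ (MvPolynomial.X s) = if Kept s then MvPolynomial.X s else 0 := by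
        rw [hψ]; exact MvPolynomial.aeval_X _ s
      have h1 : T (MvPolynomial.X s) = Polynomial.C (MvPolynomial.X s) * Polynomial.X := by
        rw [hT]; exact MvPolynomial.aeval_X _ s
      by_cases h : Kept s
      · rw [if_pos h] at h2
        rw [AlgHom.comp_apply, AlgHom.comp_apply, h2, h1, map_mul,
          Polynomial.coe_mapAlgHom, Polynomial.map_C, Polynomial.map_X]
        simp only [AlgHom.coe_toRingHom]
        rw [h2]
      · rw [if_neg h] at h2
        rw [AlgHom.comp_apply, AlgHom.comp_apply, h2, map_zero, h1, map_mul,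
          Polynomial.coe_mapAlgHom, Polynomial.map_C, Polynomial.map_X]
        simp only [AlgHom.coe_toRingHom]
        rw [h2]
        simp
    intro p
    have := AlgHom.congr_fun h p
    simpa using this
  -- the determinant of the collapsed matrix
  have hDk : D k = (M.submatrix row (Fin.castLE hkn)).det := hD k hkn
  have hmap : (M.submatrix row (Fin.castLE hkn)).map ψ
      = (Matrix.diagonal (fun ℓ => E (fa ℓ))).submatrix σstar id := by
    apply Matrix.ext; intro ℓ ℓ'
    rw [Matrix.map_apply, Matrix.submatrix_apply, Matrix.submatrix_apply, hentry ℓ ℓ',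
      Matrix.diagonal_apply]
    have hσ : σstar ℓ = fa ℓ := rfl
    rw [hσ, id_eq]
    by_cases h : fa ℓ = ℓ'
    · rw [if_pos h, if_pos h]
      simp only [← h, hfa ℓ]
    · rw [if_neg h, if_neg h]
  have hdet3 : ψ (D k) = ∏ ℓ : Fin k, E ℓ ∨ ψ (D k) = -∏ ℓ : Fin k, E ℓ := by
    have h1 : ψ (D k) = ((M.submatrix row (Fin.castLE hkn)).map ψ).det := by
      rw [hDk]
      simpa using RingHom.map_det (ψ : MvPolynomial {p : Fin n × Fin n // S p.1 p.2} K →+*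
        MvPolynomial {p : Fin n × Fin n // S p.1 p.2} K) (M.submatrix row (Fin.castLE hkn))
    rw [hmap, Matrix.det_permute, Matrix.det_diagonal] at h1
    have h2 : ∏ ℓ : Fin k, E (fa ℓ) = ∏ ℓ : Fin k, E ℓ := Equiv.prod_comp σstar E
    rw [h2] at h1
    rcases Int.units_eq_one_or (Equiv.Perm.sign σstar) with hsgn | hsgn <;>
      rw [hsgn] at h1 <;> simp only [Units.val_one, Int.cast_one, one_mul, Units.val_neg,
        Int.cast_neg, Int.cast_one, neg_mul, one_mul] at h1
    · left; exact h1
    · right; exact h1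
  -- T of the product of the E's
  have hprodgen : ∀ s : Finset (Fin k), (∀ ℓ ∈ s, A ≤ (ℓ : ℕ) ∧ (ℓ : ℕ) < r) →
      ∃ P : MvPolynomial {p : Fin n × Fin n // S p.1 p.2} K, P ≠ 0 ∧
        T (∏ ℓ ∈ s, E ℓ) = Polynomial.C P * Polynomial.X ^ s.card := by
    intro s
    induction s using Finset.induction with
    | empty => intro _; exact ⟨1, one_ne_zero, by simp⟩
    | @insert a s' hx ih =>
      intro hall
      obtain ⟨P, hP, hTP⟩ := ih (fun b hb => hall b (mem_insert_of_mem hb))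
      have ha := hall a (mem_insert_self a s')
      have hEa : E a = MvPolynomial.X ⟨(row a, Fin.castLE hkn a), hSrem a ha.1 ha.2⟩ := by
        simp only [hE]; rw [dif_pos ha]
      refine ⟨MvPolynomial.X ⟨(row a, Fin.castLE hkn a), hSrem a ha.1 ha.2⟩ * P,
        mul_ne_zero (MvPolynomial.X_ne_zero _) hP, ?_⟩
      rw [Finset.prod_insert hx, map_mul, hTP, hEa, hT, MvPolynomial.aeval_X,
        Finset.card_insert_of_notMem hx, map_mul]
      ring
  have hcard : (Finset.univ.filter fun ℓ : Fin k => A ≤ (ℓ : ℕ) ∧ (ℓ : ℕ) < r).card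
      = k - (k - r) - (k - (n - r)) := by
    rw [aux_fin_filter_card]
    omega
  obtain ⟨P, hP, hTP⟩ := hprodgen (Finset.univ.filter fun ℓ : Fin k => A ≤ (ℓ : ℕ) ∧ (ℓ : ℕ) < r)
    (fun ℓ hl => (Finset.mem_filter.mp hl).2)
  have hrest : ∏ ℓ ∈ Finset.univ.filter (fun ℓ : Fin k => ¬(A ≤ (ℓ : ℕ) ∧ (ℓ : ℕ) < r)), E ℓ
      = 1 := by
    apply Finset.prod_eq_one
    intro ℓ hl
    simp only [hE]
    rw [dif_neg (Finset.mem_filter.mp hl).2]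
  have hTprod : T (∏ ℓ : Fin k, E ℓ)
      = Polynomial.C P * Polynomial.X ^ (k - (k - r) - (k - (n - r))) := by
    rw [← Finset.prod_filter_mul_prod_filter_not Finset.univ
      (fun ℓ : Fin k => A ≤ (ℓ : ℕ) ∧ (ℓ : ℕ) < r) E, hrest, mul_one, hTP, hcard]
  -- conclude
  intro hzero
  have hψ0 : ((T (D k)).map (ψ : MvPolynomial {p : Fin n × Fin n // S p.1 p.2} K →+*
      MvPolynomial {p : Fin n × Fin n // S p.1 p.2} K)).coeff (k - (k - r) - (k - (n - r)))
      = 0 := by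
    rw [Polynomial.coeff_map, hzero, map_zero]
  rw [hcomm (D k)] at hψ0
  rcases hdet3 with h | h <;> rw [h] at hψ0
  · rw [hTprod] at hψ0
    rw [Polynomial.coeff_C_mul, Polynomial.coeff_X_pow, if_pos rfl, mul_one] at hψ0
    exact hP hψ0
  · rw [map_neg, hTprod] at hψ0
    rw [Polynomial.coeff_neg, Polynomial.coeff_C_mul, Polynomial.coeff_X_pow, if_pos rfl,
      mul_one, neg_eq_zero] at hψ0
    exact hP hψ0



set_option maxHeartbeats 2000000 in
/-- Let `M` be the generic matrix of the affine patch `w₀^P B⁻ B` of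
`SL_n/B` (ones on the two shifted anti-diagonals, independent indeterminates `x_{ij}`
at the positions of `S`, zeros elsewhere), and let `D k` (for `k ≤ n`) be the
bottom-left `k × k` minor of `M`.  Then `Q = ∏_{k=1}^{n-1} D k` is nonzero, lies in
`𝔪^{r(n-r)}`, and does not lie in `𝔪^{r(n-r)+1}`, where `𝔪` is the ideal generated by
the indeterminates.  (Indices `i, j` of `Fin n` correspond to the 1-indexed
`i+1, j+1` of the paper.) -/
theorem product_of_minors_order_of_vanishing
    {K : Type*} [Field K] (n r : ℕ) (hn : 2 ≤ n) (hr1 : 1 ≤ r) (hr2 : r ≤ n - 1)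
    (S : Fin n → Fin n → Prop)
    (hS : ∀ i j : Fin n, S i j ↔
      (((i : ℕ) + 1 ≤ r ∧ r + 1 - ((i : ℕ) + 1) < (j : ℕ) + 1 ∧ (j : ℕ) + 1 ≤ r) ∨
       (r < (i : ℕ) + 1 ∧ (j : ℕ) + 1 ≤ r) ∨
       (r < (i : ℕ) + 1 ∧ n + r + 1 - ((i : ℕ) + 1) < (j : ℕ) + 1)))
    (M : Matrix (Fin n) (Fin n) (MvPolynomial {p : Fin n × Fin n // S p.1 p.2} K))
    (hMX : ∀ (i j : Fin n) (h : S i j), M i j = MvPolynomial.X ⟨(i, j), h⟩)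
    (hM1 : ∀ i j : Fin n,
      (((i : ℕ) + 1 ≤ r ∧ (j : ℕ) + 1 = r + 1 - ((i : ℕ) + 1)) ∨
       (r < (i : ℕ) + 1 ∧ (j : ℕ) + 1 = n + r + 1 - ((i : ℕ) + 1))) → M i j = 1)
    (hM0 : ∀ i j : Fin n, ¬ S i j →
      ¬ (((i : ℕ) + 1 ≤ r ∧ (j : ℕ) + 1 = r + 1 - ((i : ℕ) + 1)) ∨
         (r < (i : ℕ) + 1 ∧ (j : ℕ) + 1 = n + r + 1 - ((i : ℕ) + 1))) → M i j = 0)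
    (D : ℕ → MvPolynomial {p : Fin n × Fin n // S p.1 p.2} K)
    (hD : ∀ (k : ℕ) (hk : k ≤ n), D k = (M.submatrix
        (fun i : Fin k => (⟨n - k + (i : ℕ), by have := i.isLt; omega⟩ : Fin n))
        (Fin.castLE hk)).det)
    (Q : MvPolynomial {p : Fin n × Fin n // S p.1 p.2} K)
    (hQ : Q = ∏ k ∈ Finset.Icc 1 (n - 1), D k)
    (𝔪 : Ideal (MvPolynomial {p : Fin n × Fin n // S p.1 p.2} K))
    (h𝔪 : 𝔪 = Ideal.span (Set.range MvPolynomial.X)) :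
    Q ≠ 0 ∧ Q ∈ 𝔪 ^ (r * (n - r)) ∧ Q ∉ 𝔪 ^ (r * (n - r) + 1) := by
  classical
  set m : ℕ → ℕ := fun k => k - (k - r) - (k - (n - r)) with hmdef
  set T : MvPolynomial {p : Fin n × Fin n // S p.1 p.2} K →ₐ[K]
      Polynomial (MvPolynomial {p : Fin n × Fin n // S p.1 p.2} K) :=
    MvPolynomial.aeval (fun s => Polynomial.C (MvPolynomial.X s) * Polynomial.X) with hT
  have hXmem : ∀ s, (MvPolynomial.X s : MvPolynomial {p : Fin n × Fin n // S p.1 p.2} K) ∈ 𝔪 :=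
    fun s => h𝔪 ▸ Ideal.subset_span ⟨s, rfl⟩
  have hmem : ∀ i j : Fin n,
      ¬ (((i : ℕ) + 1 ≤ r ∧ (j : ℕ) + 1 = r + 1 - ((i : ℕ) + 1)) ∨
         (r < (i : ℕ) + 1 ∧ (j : ℕ) + 1 = n + r + 1 - ((i : ℕ) + 1))) → M i j ∈ 𝔪 := by
    intro i j hno
    by_cases hs : S i j
    · rw [hMX i j hs]; exact hXmem _
    · rw [hM0 i j hs hno]; exact Submodule.zero_mem _
  -- Part B : membership of each minor
  have hDmem : ∀ k, 1 ≤ k → k ≤ n - 1 → D k ∈ 𝔪 ^ (m k) := by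
    intro k hk1 hk2
    have hkn : k ≤ n := by omega
    rw [hD k hkn, Matrix.det_apply']
    refine Submodule.sum_mem _ ?_
    intro σ _
    refine Ideal.mul_mem_left _ _ ?_
    set f : Fin k → MvPolynomial {p : Fin n × Fin n // S p.1 p.2} K :=
      fun i => (M.submatrix
        (fun i : Fin k => (⟨n - k + (i : ℕ), by have := i.isLt; omega⟩ : Fin n))
        (Fin.castLE hkn)) (σ i) i with hf
    have hsplit := Finset.prod_filter_mul_prod_filter_not Finset.univ (fun i => f i ∈ 𝔪) f
    rw [← hsplit]
    have hF1 : ∏ i ∈ Finset.univ.filter (fun i => f i ∈ 𝔪), f i ∈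
        𝔪 ^ (Finset.univ.filter (fun i => f i ∈ 𝔪)).card :=
      aux_prod_mem_pow_card _ _ _ (fun a ha => (Finset.mem_filter.mp ha).2)
    have hcard : m k ≤ (Finset.univ.filter (fun i => f i ∈ 𝔪)).card := by
      have hcompl : (Finset.univ.filter (fun i => f i ∈ 𝔪))ᶜ ⊆
          ((Finset.univ : Finset (Fin k)).filter fun i : Fin k =>
            0 ≤ (i : ℕ) ∧ (i : ℕ) < k - (n - r)) ∪
          ((Finset.univ : Finset (Fin k)).filter fun i : Fin k =>
            r ≤ (i : ℕ) ∧ (i : ℕ) < k) := by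
        intro i hi
        simp only [Finset.mem_compl, Finset.mem_filter, Finset.mem_univ, true_and] at hi
        by_cases hno : ((n - k + ((σ i : ℕ)) + 1 ≤ r ∧
            (i : ℕ) + 1 = r + 1 - (n - k + (σ i : ℕ) + 1)) ∨
            (r < n - k + (σ i : ℕ) + 1 ∧ (i : ℕ) + 1 = n + r + 1 - (n - k + (σ i : ℕ) + 1)))
        · simp only [Finset.mem_union, Finset.mem_filter, Finset.mem_univ, true_and]
          have h1 := (σ i).isLt
          have h2 := i.isLt
          omega
        · exact absurd (hmem _ _ hno) hi
      have h4 := Finset.card_le_card hcompl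
      have h5 := Finset.card_union_le
        ((Finset.univ : Finset (Fin k)).filter fun i : Fin k =>
          0 ≤ (i : ℕ) ∧ (i : ℕ) < k - (n - r))
        ((Finset.univ : Finset (Fin k)).filter fun i : Fin k =>
          r ≤ (i : ℕ) ∧ (i : ℕ) < k)
      have e1 := aux_fin_filter_card k 0 (k - (n - r))
      have e2 := aux_fin_filter_card k r k
      have h6 : (Finset.univ.filter (fun i => f i ∈ 𝔪))ᶜ.card
          = k - (Finset.univ.filter (fun i => f i ∈ 𝔪)).card := by
        rw [Finset.card_compl]
        simp
      have h7 : (Finset.univ.filter (fun i => f i ∈ 𝔪)).card ≤ k := by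
        have := Finset.card_filter_le (Finset.univ : Finset (Fin k)) (fun i => f i ∈ 𝔪)
        simpa using this
      simp only [hmdef]
      omega
    exact Ideal.mul_mem_right _ _ (Ideal.pow_le_pow_right hcard hF1)
  -- Part C : the sum of the orders
  have hsum : ∑ k ∈ Finset.Icc 1 (n - 1), m k = r * (n - r) := by
    simp only [hmdef]
    have h1 : ((Finset.range r) ×ˢ (Finset.range (n - r))).card = r * (n - r) := by
      simp
    rw [← h1, Finset.card_eq_sum_card_fiberwise
      (f := fun p : ℕ × ℕ => p.1 + p.2 + 1) (t := Finset.Icc 1 (n - 1))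
      (by intro p hp
          simp only [Finset.mem_coe, Finset.mem_product, Finset.mem_range] at hp
          simp only [Finset.mem_coe, Finset.mem_Icc]; omega)]
    apply Finset.sum_congr rfl
    intro k hk
    simp only [Finset.mem_Icc] at hk
    rw [show k - (k - r) - (k - (n - r)) = (Finset.Ico (k - (n - r)) (k - (k - r))).card by
      rw [Nat.card_Ico]]
    symm
    apply Finset.card_bij (fun (p : ℕ × ℕ) _ => p.1)
    · intro p hp
      simp only [Finset.mem_filter, Finset.mem_product, Finset.mem_range] at hp
      simp only [Finset.mem_Ico]; omega
    · intro p hp q hq hpq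
      simp only [Finset.mem_filter, Finset.mem_product, Finset.mem_range] at hp hq
      exact Prod.ext hpq (by omega)
    · intro x hx
      simp only [Finset.mem_Ico] at hx
      refine ⟨(x, k - 1 - x), ?_, rfl⟩
      simp only [Finset.mem_filter, Finset.mem_product, Finset.mem_range]
      omega
  -- Part D : nonvanishing of the crucial coefficient
  have hcoeff : ∀ k, 1 ≤ k → k ≤ n - 1 → (T (D k)).coeff (m k) ≠ 0 := by
    intro k hk1 hk2
    have h := aux_coeff_ne_zero n r hn hr1 hr2 S hS M hMX hM1 hM0 D hD k hk1 hk2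
    simp only [hmdef]
    rw [hT]
    exact h
  -- X-divisibility from ideal membership
  have hTdvd : ∀ (p : MvPolynomial {p : Fin n × Fin n // S p.1 p.2} K) (c : ℕ), p ∈ 𝔪 ^ c →
      (Polynomial.X : Polynomial (MvPolynomial {p : Fin n × Fin n // S p.1 p.2} K)) ^ c ∣
        T p := by
    intro p c hp
    have h1 : Ideal.map (T : MvPolynomial {p : Fin n × Fin n // S p.1 p.2} K →+*
        Polynomial (MvPolynomial {p : Fin n × Fin n // S p.1 p.2} K)) 𝔪 ≤
        Ideal.span {(Polynomial.X :
          Polynomial (MvPolynomial {p : Fin n × Fin n // S p.1 p.2} K))} := by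
      rw [Ideal.map_le_iff_le_comap, h𝔪, Ideal.span_le]
      rintro x ⟨s, rfl⟩
      simp only [SetLike.mem_coe, Ideal.mem_comap]
      rw [Ideal.mem_span_singleton]
      refine ⟨Polynomial.C (MvPolynomial.X s), ?_⟩
      show T (MvPolynomial.X s) = Polynomial.X * Polynomial.C (MvPolynomial.X s)
      rw [hT]
      rw [show (MvPolynomial.aeval
        (fun s => Polynomial.C (MvPolynomial.X s) * Polynomial.X :
          {p : Fin n × Fin n // S p.1 p.2} →
            Polynomial (MvPolynomial {p : Fin n × Fin n // S p.1 p.2} K))) (MvPolynomial.X s)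
        = Polynomial.C (MvPolynomial.X s) * Polynomial.X from MvPolynomial.aeval_X _ s]
      ring
    have h2 : T p ∈ Ideal.map (T : MvPolynomial {p : Fin n × Fin n // S p.1 p.2} K →+*
        Polynomial (MvPolynomial {p : Fin n × Fin n // S p.1 p.2} K)) (𝔪 ^ c) :=
      Ideal.mem_map_of_mem _ hp
    rw [Ideal.map_pow] at h2
    have h3 := Ideal.pow_right_mono h1 c h2
    rwa [Ideal.span_singleton_pow, Ideal.mem_span_singleton] at h3
  -- decompose each T (D k)
  have hgex : ∀ k : ℕ, ∃ gp : Polynomial (MvPolynomial {p : Fin n × Fin n // S p.1 p.2} K),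
      (1 ≤ k → k ≤ n - 1 →
        (T (D k) = Polynomial.X ^ (m k) * gp ∧ gp.coeff 0 ≠ 0)) := by
    intro k
    by_cases hk : 1 ≤ k ∧ k ≤ n - 1
    · obtain ⟨gp, hgp⟩ := hTdvd (D k) (m k) (hDmem k hk.1 hk.2)
      refine ⟨gp, fun _ _ => ⟨hgp, ?_⟩⟩
      have hc := hcoeff k hk.1 hk.2
      rw [hgp] at hc
      have he : (Polynomial.X ^ (m k) * gp).coeff (m k) = gp.coeff 0 := by
        simpa using Polynomial.coeff_X_pow_mul gp (m k) 0
      rwa [he] at hc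
    · exact ⟨0, fun h1 h2 => absurd ⟨h1, h2⟩ hk⟩
  choose gp hgp using hgex
  have hTQ : T Q = Polynomial.X ^ (r * (n - r)) * ∏ k ∈ Finset.Icc 1 (n - 1), gp k := by
    rw [hQ, map_prod]
    rw [Finset.prod_congr rfl (fun k hk =>
      ((hgp k (Finset.mem_Icc.mp hk).1 (Finset.mem_Icc.mp hk).2).1))]
    rw [Finset.prod_mul_distrib, Finset.prod_pow_eq_pow_sum, hsum]
  have hQcoeff : (T Q).coeff (r * (n - r)) ≠ 0 := by
    rw [hTQ]
    have hco : ((Polynomial.X : Polynomial (MvPolynomial {p : Fin n × Fin n // S p.1 p.2} K))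
        ^ (r * (n - r)) * ∏ k ∈ Finset.Icc 1 (n - 1), gp k).coeff (r * (n - r))
        = (∏ k ∈ Finset.Icc 1 (n - 1), gp k).coeff 0 := by
      simpa using Polynomial.coeff_X_pow_mul (∏ k ∈ Finset.Icc 1 (n - 1), gp k) (r * (n - r)) 0
    rw [hco]
    have hcc : (∏ k ∈ Finset.Icc 1 (n - 1), gp k).coeff 0
        = ∏ k ∈ Finset.Icc 1 (n - 1), (gp k).coeff 0 := by
      exact map_prod (Polynomial.constantCoeff) gp (Finset.Icc 1 (n - 1))
    rw [hcc, Finset.prod_ne_zero_iff]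
    intro k hk
    exact (hgp k (Finset.mem_Icc.mp hk).1 (Finset.mem_Icc.mp hk).2).2
  refine ⟨?_, ?_, ?_⟩
  · intro h0
    apply hQcoeff
    rw [h0, map_zero, Polynomial.coeff_zero]
  · rw [hQ, ← hsum]
    exact aux_prod_mem_pow 𝔪 _ D m
      (fun k hk => hDmem k (Finset.mem_Icc.mp hk).1 (Finset.mem_Icc.mp hk).2)
  · intro hQmem
    have hdvd := hTdvd Q (r * (n - r) + 1) hQmem
    rw [Polynomial.X_pow_dvd_iff] at hdvd
    exact hQcoeff (hdvd _ (Nat.lt_succ_self _))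
end
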